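/- Let C be a category with an initial object k and binary coproducts, and let (H, Δ, ε, S) be a Zhang algebra of C. Then the coproduct Δ is compatible with the adjoint coaction: Ω_c^{(2)} ∘ Δ = (id_H ⊔ Δ) ∘ Ω_c as morphisms H → H ⊔ (H ⊔ H), where id_H ⊔ Δ applies Δ to the second coproduct factor of H ⊔ H. -/

import Mathlib

open CategoryTheory CategoryTheory.Limits

universe u v

/-- The adjoint coaction `Ω_c := (ι₁ ⊔̇ ι₂ ⊔̇ ι₁) ∘ (id_{H⊔H} ⊔ S) ∘ (Δ ⊔ id_H) ∘ Δ` of a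
Zhang algebra on itself; the first coproduct factor is the coacting copy and the second the
comodule copy. -/
noncomputable def adjointCoaction {C : Type u} [Category.{v} C] [HasBinaryCoproducts C]
    (H : C) (Δ : H ⟶ H ⨿ H) (S : H ⟶ H) : H ⟶ H ⨿ H :=
  Δ ≫ coprod.map Δ (𝟙 H) ≫ coprod.map (𝟙 (H ⨿ H)) S ≫
    coprod.desc (coprod.desc coprod.inl coprod.inr) coprod.inl

/-- The induced coaction `Ω_c² := (j₁ ⊔̇ j₂ ⊔̇ j₁ ⊔̇ j₃) ∘ (Ω_c ⊔ Ω_c) : H ⊔ H → H ⊔ (H ⊔ H)`,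
where `j₁, j₂, j₃ : H → H ⊔ (H ⊔ H)` are the three canonical injections: the coacting letters
of both copies are gathered into the first factor, while the comodule letters of the first
and second copies go to the second and third factors respectively. -/
noncomputable def adjointCoaction₂ {C : Type u} [Category.{v} C] [HasBinaryCoproducts C]
    (H : C) (Δ : H ⟶ H ⨿ H) (S : H ⟶ H) : H ⨿ H ⟶ H ⨿ (H ⨿ H) :=
  coprod.map (adjointCoaction H Δ S) (adjointCoaction H Δ S) ≫
    coprod.desc
      (coprod.desc coprod.inl (coprod.inl ≫ coprod.inr))
      (coprod.desc coprod.inl (coprod.inr ≫ coprod.inr))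

section Aux
set_option linter.unusedSectionVars false


variable {C : Type u} [Category.{v} C] [HasInitial C] [HasBinaryCoproducts C]
variable {H X : C} (Δ : H ⟶ H ⨿ H) (ε : H ⟶ ⊥_ C) (S : H ⟶ H)

/-- "convolution": `f ⋆ g = Δ ≫ desc f g`. Associativity from coassociativity. -/
theorem zhang_conv_assoc
    (hcoassoc : Δ ≫ coprod.map Δ (𝟙 H) ≫ (coprod.associator H H H).hom
      = Δ ≫ coprod.map (𝟙 H) Δ)
    (f g h : H ⟶ X) :
    Δ ≫ coprod.desc (Δ ≫ coprod.desc f g) h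
      = Δ ≫ coprod.desc f (Δ ≫ coprod.desc g h) := by
  have h1 : Δ ≫ coprod.desc (Δ ≫ coprod.desc f g) h
      = Δ ≫ coprod.map Δ (𝟙 H) ≫ (coprod.associator H H H).hom
          ≫ coprod.desc f (coprod.desc g h) := by
    simp [coprod.inl_desc, coprod.inr_desc, coprod.inl_desc_assoc, coprod.inr_desc_assoc]
  rw [h1, reassoc_of% hcoassoc]
  simp

theorem zhang_conv_unit_r
    (hcounit_r : Δ ≫ coprod.desc (𝟙 H) (ε ≫ initial.to H) = 𝟙 H)
    (f : H ⟶ X) :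
    Δ ≫ coprod.desc f (ε ≫ initial.to X) = f := by
  have : coprod.desc f (ε ≫ initial.to X)
      = coprod.desc (𝟙 H) (ε ≫ initial.to H) ≫ f := by
    ext <;> simp
  rw [this, ← Category.assoc, hcounit_r, Category.id_comp]

theorem zhang_conv_unit_l
    (hcounit_l : Δ ≫ coprod.desc (ε ≫ initial.to H) (𝟙 H) = 𝟙 H)
    (f : H ⟶ X) :
    Δ ≫ coprod.desc (ε ≫ initial.to X) f = f := by
  have : coprod.desc (ε ≫ initial.to X) f
      = coprod.desc (ε ≫ initial.to H) (𝟙 H) ≫ f := by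
    ext <;> simp
  rw [this, ← Category.assoc, hcounit_l, Category.id_comp]

theorem zhang_conv_antipode_l
    (hantipode_l : Δ ≫ coprod.desc S (𝟙 H) = ε ≫ initial.to H)
    (f : H ⟶ X) :
    Δ ≫ coprod.desc (S ≫ f) f = ε ≫ initial.to X := by
  have : coprod.desc (S ≫ f) f = coprod.desc S (𝟙 H) ≫ f := by
    ext <;> simp
  rw [this, ← Category.assoc, hantipode_l, Category.assoc, initial.to_comp]

end Aux

/-- For a Zhang algebra `(H, Δ, ε, S)`, the coproduct `Δ` is compatible with
the adjoint coaction: `Ω_c² ∘ Δ = (id_H ⊔ Δ) ∘ Ω_c : H → H ⊔ (H ⊔ H)`. -/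
theorem zhang_coproduct_adjointCoaction
    {C : Type u} [Category.{v} C] [HasInitial C] [HasBinaryCoproducts C]
    (H : C) (Δ : H ⟶ H ⨿ H) (ε : H ⟶ ⊥_ C) (S : H ⟶ H)
    (hcoassoc : Δ ≫ coprod.map Δ (𝟙 H) ≫ (coprod.associator H H H).hom
      = Δ ≫ coprod.map (𝟙 H) Δ)
    (hcounit_l : Δ ≫ coprod.desc (ε ≫ initial.to H) (𝟙 H) = 𝟙 H)
    (hcounit_r : Δ ≫ coprod.desc (𝟙 H) (ε ≫ initial.to H) = 𝟙 H)
    (hantipode_l : Δ ≫ coprod.desc S (𝟙 H) = ε ≫ initial.to H)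
    (hantipode_r : Δ ≫ coprod.desc (𝟙 H) S = ε ≫ initial.to H) :
    Δ ≫ adjointCoaction₂ H Δ S
      = adjointCoaction H Δ S ≫ coprod.map (𝟙 H) Δ := by
  have hΩ : adjointCoaction H Δ S = Δ ≫ coprod.desc Δ (S ≫ coprod.inl) := by
    simp [adjointCoaction]
  have hmap : coprod.map (𝟙 H) Δ
      = coprod.desc coprod.inl
          (Δ ≫ coprod.desc (coprod.inl ≫ coprod.inr)
            (coprod.inr ≫ coprod.inr) :
            H ⟶ H ⨿ (H ⨿ H)) := by
    have hinr : (coprod.desc (coprod.inl ≫ coprod.inr) (coprod.inr ≫ coprod.inr) :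
        H ⨿ H ⟶ H ⨿ (H ⨿ H)) = coprod.inr := by ext <;> simp [coprod.inl_desc, coprod.inr_desc, coprod.inl_desc_assoc, coprod.inr_desc_assoc]
    rw [hinr]
    ext <;> simp [coprod.inl_desc, coprod.inr_desc, coprod.inl_desc_assoc, coprod.inr_desc_assoc]
  have cA := fun f g h =>
    zhang_conv_assoc (X := H ⨿ (H ⨿ H)) Δ hcoassoc f g h
  simp only [adjointCoaction₂, hΩ, hmap]
  simp only [coprod.map_desc, Category.assoc, coprod.desc_comp, coprod.inl_desc,
    coprod.inr_desc, Category.id_comp]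
  rw [cA (Δ ≫ coprod.desc coprod.inl (coprod.inl ≫ coprod.inr)) (S ≫ coprod.inl) _,
      cA coprod.inl (coprod.inr ≫ coprod.inr) (S ≫ coprod.inl),
      ← cA (S ≫ coprod.inl) coprod.inl
        (Δ ≫ coprod.desc (coprod.inr ≫ coprod.inr) (S ≫ coprod.inl)),
      zhang_conv_antipode_l Δ ε S hantipode_l coprod.inl,
      zhang_conv_unit_l Δ ε hcounit_l,
      cA coprod.inl (coprod.inl ≫ coprod.inr) _,
      cA coprod.inl (Δ ≫ coprod.desc (coprod.inl ≫ coprod.inr) (coprod.inr ≫ coprod.inr))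
        (S ≫ coprod.inl),
      cA (coprod.inl ≫ coprod.inr) (coprod.inr ≫ coprod.inr) (S ≫ coprod.inl)]
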